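/- arXiv:1504.06163 — 2 statements merged into one kernel-verified Lean document; each statement's English description precedes it below -/
import Mathlib

section
/- For an element a ∈ R, a belongs to ca^n(R) if and only if a annihilates Ext_R^n(M,N) for all finitely generated R-modules M and N, i.e., ca^n(R) = ⋂_{M,N} Ann_R Ext_R^n(M,N). -/
open CategoryTheory IsLocalRing

noncomputable section

/-- The `n`-th Ext module of two `R`-modules. -/
def extMod (R : Type) [CommRing R] (n : ℕ) (M N : ModuleCat R) : ModuleCat R :=
  ((Ext R (ModuleCat R) n).obj (Opposite.op M)).obj N

/-- The `n`-th cohomology annihilator `ca^n(R)`. -/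
def caIdeal (R : Type) [CommRing R] (n : ℕ) : Ideal R where
  carrier := {a | ∀ (M N : ModuleCat R), Module.Finite R M → Module.Finite R N →
      ∀ i, n ≤ i → ∀ x : extMod R i M N, a • x = 0}
  add_mem' := by
    intro a b ha hb M N hM hN i hi x
    rw [add_smul, ha M N hM hN i hi x, hb M N hM hN i hi x, add_zero]
  zero_mem' := by intro M N hM hN i hi x; simp
  smul_mem' := by
    intro c a ha M N hM hN i hi x
    rw [smul_eq_mul, mul_smul, ha M N hM hN i hi x, smul_zero]

/-- `M` is an `n`-th syzygy of `X` (with respect to finite free resolutions). -/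
def IsSyz (R : Type) [CommRing R] : ℕ → ModuleCat R → ModuleCat R → Prop
  | 0, M, X => Nonempty (M ≅ X)
  | n + 1, M, X => ∃ (P Y : ModuleCat R) (f : M ⟶ P) (g : P ⟶ Y),
      Module.Free R P ∧ Module.Finite R P ∧ Function.Injective f ∧
      Function.Surjective g ∧ Function.Exact f g ∧ IsSyz R n Y X

/-- `M` is a direct summand of `N`. -/
def Summand (R : Type) [CommRing R] (M N : ModuleCat R) : Prop :=
  ∃ (i : M ⟶ N) (p : N ⟶ M), i ≫ p = 𝟙 M

/-- `M` belongs to `add X`. -/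
def InAdd (R : Type) [CommRing R] (X M : ModuleCat R) : Prop :=
  ∃ k : ℕ, Summand R M (ModuleCat.of R (Fin k → X))

/-- `M` has a filtration of length `r` whose subquotients lie in `C`. -/
def Filt (R : Type) [CommRing R] (C : ModuleCat R → Prop) : ℕ → ModuleCat R → Prop
  | 0, M => Subsingleton M
  | r + 1, M => ∃ (A B : ModuleCat R) (f : A ⟶ M) (g : M ⟶ B),
      Function.Injective f ∧ Function.Surjective g ∧ Function.Exact f g ∧
      Filt R C r A ∧ C B

/-- the ball `|X|_r`. -/
def InBall (R : Type) [CommRing R] (X : ModuleCat R) (r : ℕ) (M : ModuleCat R) : Prop :=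
  ∃ N, Filt R (InAdd R X) r N ∧ Summand R M N

/-- the extension closure of a class of modules. -/
inductive ExtClosed (R : Type) [CommRing R] (C : ModuleCat R → Prop) : ModuleCat R → Prop
  | base {M} : C M → ExtClosed R C M
  | summand {M N} : ExtClosed R C N → Summand R M N → ExtClosed R C M
  | extension {A E B : ModuleCat R} (f : A ⟶ E) (g : E ⟶ B) :
      Function.Injective f → Function.Surjective g → Function.Exact f g →
      ExtClosed R C A → ExtClosed R C B → ExtClosed R C E

/-- the thick closure of a class of modules. -/
inductive ThickClosed (R : Type) [CommRing R] (C : ModuleCat R → Prop) : ModuleCat R → Prop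
  | base {M} : C M → ThickClosed R C M
  | summand {M N} : ThickClosed R C N → Summand R M N → ThickClosed R C M
  | ext2 {A E B : ModuleCat R} (f : A ⟶ E) (g : E ⟶ B) :
      Function.Injective f → Function.Surjective g → Function.Exact f g →
      ThickClosed R C A → ThickClosed R C B → ThickClosed R C E
  | ker2 {A E B : ModuleCat R} (f : A ⟶ E) (g : E ⟶ B) :
      Function.Injective f → Function.Surjective g → Function.Exact f g →
      ThickClosed R C E → ThickClosed R C B → ThickClosed R C A
  | coker2 {A E B : ModuleCat R} (f : A ⟶ E) (g : E ⟶ B) :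
      Function.Injective f → Function.Surjective g → Function.Exact f g →
      ThickClosed R C A → ThickClosed R C E → ThickClosed R C B

/-- A (noetherian) local ring is regular if its maximal ideal can be generated by
`dim` many elements. -/
def IsRegularLocal (A : Type) [CommRing A] [IsLocalRing A] : Prop :=
  IsNoetherianRing A ∧ ∃ s : Finset A, Ideal.span (s : Set A) = maximalIdeal A ∧
    (s.card : WithBot (WithTop ℕ)) = ringKrullDim A


section AuxShift

open CategoryTheory Limits HomologicalComplex

variable {R : Type} [CommRing R]

set_option maxHeartbeats 1000000 in
lemma extMod_shift [IsNoetherianRing R] (M : ModuleCat R) (hM : Module.Finite R M) :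
    ∃ K : ModuleCat R, Module.Finite R K ∧ ∀ (N : ModuleCat R) (i : ℕ),
      ∃ f : extMod R i K N ⟶ extMod R (i + 1) M N, Function.Surjective f := by
  obtain ⟨k, p, hp⟩ := Module.Finite.exists_fin' R M
  haveI : Module.Finite R ↥(LinearMap.ker p) :=
    Module.Finite.iff_fg.mpr (IsNoetherian.noetherian _)
  set F : ModuleCat R := ModuleCat.of R (Fin k → R) with hF
  set K : ModuleCat R := ModuleCat.of R ↥(LinearMap.ker p) with hK
  refine ⟨K, this, ?_⟩
  set Q : ProjectiveResolution K := ProjectiveResolution.of K with hQ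
  -- the inclusion
  set ι : ((ChainComplex.single₀ (ModuleCat R)).obj K).X 0 ⟶ F := ModuleCat.ofHom (LinearMap.ker p).subtype with hι
  -- the spliced complex
  set Xf : ℕ → ModuleCat R := fun n => match n with
    | 0 => F
    | (j+1) => Q.complex.X j with hXf
  set df : ∀ n : ℕ, Xf (n+1) ⟶ Xf n := fun n => match n with
    | 0 => (Q.π.f 0 ≫ ι : Q.complex.X 0 ⟶ F)
    | (j+1) => Q.complex.d (j+1) j with hdf
  have sq : ∀ n, df (n+1) ≫ df n = 0 := by
    rintro (_|n)
    · show Q.complex.d 1 0 ≫ (Q.π.f 0 ≫ ι) = 0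
      rw [← Category.assoc, Q.complex_d_comp_π_f_zero, zero_comp]
    · exact Q.complex.d_comp_d _ _ _
  set Pc : ChainComplex (ModuleCat R) ℕ := ChainComplex.of Xf df sq with hPc
  have hd10 : Pc.d 1 0 = Q.π.f 0 ≫ ι := by exact ChainComplex.of_d (V := ModuleCat R) _ _ 0
  have hdsucc : ∀ j : ℕ, Pc.d (j+2) (j+1) = Q.complex.d (j+1) j := fun j =>
    by exact ChainComplex.of_d _ _ (j+1)
  have hιp : ι ≫ ModuleCat.ofHom p = 0 := by
    ext x
    exact x.2
  have hcomm : Pc.d 1 0 ≫ ModuleCat.ofHom p = 0 := by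
    rw [hd10, Category.assoc, hιp, comp_zero]
  haveI hproj : ∀ n, Projective (Pc.X n) := by
    rintro (_|n)
    · exact ModuleCat.projective_of_free (Pi.basisFun R (Fin k))
    · exact Q.projective n
  set P : ProjectiveResolution M :=
    { complex := Pc
      projective := hproj
      π := (ChainComplex.toSingle₀Equiv _ _).symm ⟨ModuleCat.ofHom p, hcomm⟩
      quasiIso := ⟨fun n => by
        cases n with
        | zero =>
          rw [ChainComplex.quasiIsoAt₀_iff, ShortComplex.quasiIso_iff_of_zeros']
          · constructor
            · rw [ShortComplex.moduleCat_exact_iff]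
              intro x hx
              dsimp at hx ⊢
              change p x = 0 at hx
              have hx' : x ∈ LinearMap.ker p := hx
              obtain ⟨z, hz⟩ := (ModuleCat.epi_iff_surjective (Q.π.f 0)).1
                inferInstance ⟨x, hx'⟩
              refine ⟨z, ?_⟩
              have := hd10
              refine (congrArg (fun f : Pc.X 1 ⟶ Pc.X 0 => f.hom z) hd10).trans ?_
              show ι (Q.π.f 0 z) = x
              rw [hz]
              rfl
            · show Epi (((Pc.toSingle₀Equiv M).symm ⟨ModuleCat.ofHom p, hcomm⟩).f 0)
              rw [ChainComplex.toSingle₀Equiv_symm_apply_f_zero]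
              exact (ModuleCat.epi_iff_surjective _).2 hp
          all_goals rfl
        | succ n =>
          rw [quasiIsoAt_iff_exactAt' _ _ (ChainComplex.exactAt_succ_single_obj _ _)]
          rw [HomologicalComplex.exactAt_iff' _ (n+2) (n+1) n (by simp) (by simp)]
          rw [ShortComplex.moduleCat_exact_iff]
          intro x hx
          cases n with
          | zero =>
            dsimp at x hx ⊢
            change (Pc.d 1 0).hom x = 0 at hx
            change ∃ x₁, (Pc.d 2 1).hom x₁ = x
            rw [hd10] at hx
            have hx0 : Q.π.f 0 x = 0 := Subtype.ext hx
            obtain ⟨y, hy⟩ := (ShortComplex.moduleCat_exact_iff _).1 Q.exact₀ x hx0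
            exact ⟨y, by rw [hdsucc 0]; exact hy⟩
          | succ m =>
            dsimp at x hx ⊢
            change (Pc.d (m+2) (m+1)).hom x = 0 at hx
            change ∃ x₁, (Pc.d (m+3) (m+2)).hom x₁ = x
            rw [hdsucc] at hx
            obtain ⟨y, hy⟩ := (ShortComplex.moduleCat_exact_iff _).1 (Q.exact_succ m) x hx
            exact ⟨y, by rw [hdsucc]; exact hy⟩⟩ } with hP
  have hPC : P.complex = Pc := rfl
  intro N i
  have hCD : ∀ j : ℕ, (Pc.linearYonedaObj R N).d (j+1) (j+2)
      = (Q.complex.linearYonedaObj R N).d j (j+1) := by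
    intro j
    rw [ChainComplex.linearYonedaObj_d, ChainComplex.linearYonedaObj_d, hdsucc j]
  obtain (_ | j) := i
  · -- i = 0
    set ψ : (Q.complex.linearYonedaObj R N).sc' 0 0 1 ⟶ (Pc.linearYonedaObj R N).sc' 0 1 2 :=
      { τ₁ := 0
        τ₂ := 𝟙 _
        τ₃ := 𝟙 _
        comm₁₂ := by
          show (0 : _) ≫ (Pc.linearYonedaObj R N).d 0 1
              = (Q.complex.linearYonedaObj R N).d 0 0 ≫ 𝟙 _
          rw [HomologicalComplex.shape _ 0 0 (by simp), zero_comp, zero_comp]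
          rfl
        comm₂₃ := by
          show 𝟙 _ ≫ (Pc.linearYonedaObj R N).d 1 2
              = (Q.complex.linearYonedaObj R N).d 0 1 ≫ 𝟙 _
          rw [Category.id_comp, Category.comp_id, hCD 0] } with hψ
    haveI h2 : IsIso ψ.τ₂ := (inferInstance : IsIso (𝟙 _))
    haveI h3 : Mono ψ.τ₃ := (inferInstance : Mono (𝟙 _))
    haveI h4 : IsIso (ShortComplex.cyclesMap ψ) :=
      ShortComplex.isIso_cyclesMap_of_isIso_of_mono ψ
    haveI h5 : Epi (ShortComplex.homologyMap ψ) :=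
      ShortComplex.epi_homologyMap_of_epi_cyclesMap ψ
    refine ⟨(Q.isoExt 0 N).hom
      ≫ ((Q.complex.linearYonedaObj R N).homologyIsoSc' 0 0 1 (by simp) (by simp)).hom
      ≫ ShortComplex.homologyMap ψ
      ≫ ((Pc.linearYonedaObj R N).homologyIsoSc' 0 1 2 (by simp) (by simp)).inv
      ≫ (by rw [hPC] : (P.complex.linearYonedaObj R N).homology 1
            ≅ (Pc.linearYonedaObj R N).homology 1).inv
      ≫ (P.isoExt 1 N).inv, ?_⟩
    exact (ModuleCat.epi_iff_surjective _).1 (epi_comp' (inferInstance : Epi (Q.isoExt 0 N).hom)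
      (epi_comp' inferInstance (epi_comp' h5 (epi_comp' inferInstance
        (epi_comp' inferInstance (inferInstance : Epi (P.isoExt 1 N).inv))))))
  · -- i = j+1
    set ψ : (Q.complex.linearYonedaObj R N).sc' j (j+1) (j+2)
        ⟶ (Pc.linearYonedaObj R N).sc' (j+1) (j+2) (j+3) :=
      { τ₁ := 𝟙 _
        τ₂ := 𝟙 _
        τ₃ := 𝟙 _
        comm₁₂ := by
          show 𝟙 _ ≫ (Pc.linearYonedaObj R N).d (j+1) (j+2)
              = (Q.complex.linearYonedaObj R N).d j (j+1) ≫ 𝟙 _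
          rw [Category.id_comp, Category.comp_id, hCD j]
        comm₂₃ := by
          show 𝟙 _ ≫ (Pc.linearYonedaObj R N).d (j+2) (j+3)
              = (Q.complex.linearYonedaObj R N).d (j+1) (j+2) ≫ 𝟙 _
          rw [Category.id_comp, Category.comp_id, hCD (j+1)] } with hψ
    haveI h2 : IsIso ψ.τ₂ := (inferInstance : IsIso (𝟙 _))
    haveI h3 : Mono ψ.τ₃ := (inferInstance : Mono (𝟙 _))
    haveI h4 : IsIso (ShortComplex.cyclesMap ψ) :=
      ShortComplex.isIso_cyclesMap_of_isIso_of_mono ψ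
    haveI h5 : Epi (ShortComplex.homologyMap ψ) :=
      ShortComplex.epi_homologyMap_of_epi_cyclesMap ψ
    refine ⟨(Q.isoExt (j+1) N).hom
      ≫ ((Q.complex.linearYonedaObj R N).homologyIsoSc' j (j+1) (j+2) (by simp) (by simp)).hom
      ≫ ShortComplex.homologyMap ψ
      ≫ ((Pc.linearYonedaObj R N).homologyIsoSc' (j+1) (j+2) (j+3) (by simp) (by simp)).inv
      ≫ (by rw [hPC] : (P.complex.linearYonedaObj R N).homology (j+2)
            ≅ (Pc.linearYonedaObj R N).homology (j+2)).inv
      ≫ (P.isoExt (j+2) N).inv, ?_⟩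
    exact (ModuleCat.epi_iff_surjective _).1 (epi_comp' (inferInstance : Epi (Q.isoExt (j+1) N).hom)
      (epi_comp' inferInstance (epi_comp' h5 (epi_comp' inferInstance
        (epi_comp' inferInstance (inferInstance : Epi (P.isoExt (j+2) N).inv))))))


end AuxShift

/-- `a ∈ ca^n(R)` iff `a` annihilates `Ext^n(M,N)` for all finitely generated `M`, `N`. -/
theorem mem_caIdeal_iff_ann_ext (R : Type) [CommRing R] [IsNoetherianRing R] (n : ℕ) (a : R) :
    a ∈ caIdeal R n ↔ ∀ (M N : ModuleCat R), Module.Finite R M → Module.Finite R N →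
      ∀ x : extMod R n M N, a • x = 0 := by
  constructor
  · intro h M N hM hN x
    exact h M N hM hN n le_rfl x
  · intro h
    have key : ∀ j (M N : ModuleCat R), Module.Finite R M → Module.Finite R N →
        ∀ x : extMod R (n + j) M N, a • x = 0 := by
      intro j
      induction j with
      | zero => exact h
      | succ j ih =>
        intro M N hM hN x
        obtain ⟨K, hK, hf⟩ := extMod_shift M hM
        obtain ⟨f, hf2⟩ := hf N (n + j)
        obtain ⟨y, rfl⟩ := hf2 x
        have h0 : f.hom (a • y) = a • f.hom y := map_smul f.hom a y
        rw [ih K N hK hN y, map_zero] at h0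
        exact h0.symm
    show ∀ (M N : ModuleCat R), Module.Finite R M → Module.Finite R N →
      ∀ i, n ≤ i → ∀ x : extMod R i M N, a • x = 0
    intro M N hM hN i hi x
    obtain ⟨j, rfl⟩ := Nat.exists_eq_add_of_le hi
    exact key j M N hM hN x

end
end

section
/- Let (R,m) be a d-dimensional Gorenstein local ring and let t ≥ 1 be such that m^t annihilates all stable Hom groups between maximal Cohen–Macaulay R-modules (Hom modulo maps factoring through projectives). Then m^t ⊆ ca^{d+1}(R), i.e., m^t annihilates Ext_R^{d+1}(A,B) for all finitely generated R-modules A, B. -/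
open CategoryTheory IsLocalRing

noncomputable section

/-! ### Auxiliary machinery for the main theorem -/

section StableHomAux

open HomologicalComplex

variable {R : Type} [CommRing R]

lemma auxSubsingletonOfIso {M N : ModuleCat R} (e : M ≅ N) (h : Subsingleton N) :
    Subsingleton M := by
  constructor
  intro a b
  rw [← e.hom_inv_id_apply a, ← e.hom_inv_id_apply b]
  exact congrArg _ (Subsingleton.elim _ _)

lemma auxSmulZeroOfIso {M N : ModuleCat R} (e : M ≅ N) (s : R)
    (h : ∀ y : N, s • y = 0) (x : M) : s • x = 0 := by
  rw [← e.hom_inv_id_apply (s • x), map_smul, h, map_zero]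

/-- A chosen surjection onto a finite module from a finite free module. -/
structure AuxStep (R : Type) [CommRing R] where
  M : ModuleCat R
  fin : Module.Finite R M
  k : ℕ
  p : (Fin k → R) →ₗ[R] M
  surj : Function.Surjective p

noncomputable def auxMkStep (M : ModuleCat R) (fin : Module.Finite R M) : AuxStep R := by
  haveI := fin
  exact ⟨M, fin, (Module.Finite.exists_fin' R M).choose,
    (Module.Finite.exists_fin' R M).choose_spec.choose,
    (Module.Finite.exists_fin' R M).choose_spec.choose_spec⟩

variable [IsNoetherianRing R]

/-- Iterated syzygy data for a finite module over a noetherian ring. -/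
noncomputable def auxSteps (A : ModuleCat R) (hA : Module.Finite R A) : ℕ → AuxStep R
  | 0 => auxMkStep A hA
  | n + 1 =>
    auxMkStep (ModuleCat.of R (LinearMap.ker (auxSteps A hA n).p))
      (Module.Finite.iff_fg.mpr (IsNoetherian.noetherian _))

/-- The free modules in the chosen resolution. -/
noncomputable def resF (A : ModuleCat R) (hA : Module.Finite R A) (n : ℕ) : ModuleCat R :=
  ModuleCat.of R (Fin (auxSteps A hA n).k → R)

/-- The differentials of the chosen resolution. -/
noncomputable def resD (A : ModuleCat R) (hA : Module.Finite R A) (n : ℕ) :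
    resF A hA (n + 1) ⟶ resF A hA n :=
  ModuleCat.ofHom ((LinearMap.ker (auxSteps A hA n).p).subtype ∘ₗ (auxSteps A hA (n + 1)).p)

lemma resD_ker (A : ModuleCat R) (hA : Module.Finite R A) (n : ℕ) :
    LinearMap.range (resD A hA (n + 1)).hom = LinearMap.ker (resD A hA n).hom := by
  show LinearMap.range
      ((LinearMap.ker (auxSteps A hA (n + 1)).p).subtype ∘ₗ (auxSteps A hA (n + 2)).p)
    = LinearMap.ker ((LinearMap.ker (auxSteps A hA n).p).subtype ∘ₗ (auxSteps A hA (n + 1)).p)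
  erw [LinearMap.range_comp, LinearMap.range_eq_top.2 (auxSteps A hA (n + 2)).surj,
    Submodule.map_top, Submodule.range_subtype, LinearMap.ker_comp, Submodule.ker_subtype,
    Submodule.comap_bot]
  rfl

lemma res_p0_surj (A : ModuleCat R) (hA : Module.Finite R A) :
    Function.Surjective ((auxSteps A hA 0).p) := (auxSteps A hA 0).surj

lemma res_p0_ker (A : ModuleCat R) (hA : Module.Finite R A) :
    LinearMap.range (resD A hA 0).hom = LinearMap.ker (auxSteps A hA 0).p := by
  show LinearMap.range ((LinearMap.ker (auxSteps A hA 0).p).subtype ∘ₗ (auxSteps A hA 1).p) = _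
  erw [LinearMap.range_comp, LinearMap.range_eq_top.2 (auxSteps A hA 1).surj,
    Submodule.map_top, Submodule.range_subtype]

instance resF_finite (A : ModuleCat R) (hA : Module.Finite R A) (n : ℕ) :
    Module.Finite R (resF A hA n) := by
  show Module.Finite R (Fin (auxSteps A hA n).k → R); infer_instance

instance resF_projective (A : ModuleCat R) (hA : Module.Finite R A) (n : ℕ) :
    Projective (resF A hA n) :=
  ModuleCat.projective_of_free (Pi.basisFun R (Fin (auxSteps A hA n).k))

/-- Building a chain complex out of concrete linear-algebra data. -/
noncomputable def mkCplx (F : ℕ → ModuleCat R) (dF : ∀ n, F (n + 1) ⟶ F n)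
    (hn : ∀ n, LinearMap.range (dF (n + 1)).hom ≤ LinearMap.ker (dF n).hom) :
    ChainComplex (ModuleCat R) ℕ :=
  ChainComplex.of F dF (fun n => by
    ext x
    have : (dF (n + 1)).hom x ∈ LinearMap.ker (dF n).hom := hn n (LinearMap.mem_range_self _ x)
    simpa using this)

section

variable {F : ℕ → ModuleCat R} {dF : ∀ n, F (n + 1) ⟶ F n}
  {hn : ∀ n, LinearMap.range (dF (n + 1)).hom ≤ LinearMap.ker (dF n).hom}

lemma mkCplx_d (j : ℕ) : (mkCplx F dF hn).d (j + 1) j = dF j :=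
  ChainComplex.of_d _ _ j

lemma mkCplx_d10 : (mkCplx F dF hn).d 1 0 = dF 0 := mkCplx_d 0

lemma mkCplx_d21 (n : ℕ) : (mkCplx F dF hn).d (n + 2) (n + 1) = dF (n + 1) := mkCplx_d (n + 1)

end

/-- Building a projective resolution out of concrete linear-algebra data. -/
noncomputable def mkRes (Z : ModuleCat R) (F : ℕ → ModuleCat R)
    (hproj : ∀ n, Projective (F n))
    (dF : ∀ n, F (n + 1) ⟶ F n) (p0 : F 0 ⟶ Z)
    (hsurj : Function.Surjective p0.hom)
    (h0 : LinearMap.range (dF 0).hom = LinearMap.ker p0.hom)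
    (hd : ∀ n, LinearMap.range (dF (n + 1)).hom = LinearMap.ker (dF n).hom) :
    ProjectiveResolution Z where
  complex := mkCplx F dF (fun n => (hd n).le)
  projective := hproj
  π := (ChainComplex.toSingle₀Equiv _ _).symm ⟨p0, by
    rw [mkCplx_d10]
    ext x
    have : (dF 0).hom x ∈ LinearMap.ker p0.hom := h0 ▸ LinearMap.mem_range_self _ x
    exact this⟩
  quasiIso := ⟨fun n => by
    cases n with
    | zero =>
      rw [ChainComplex.quasiIsoAt₀_iff, ShortComplex.quasiIso_iff_of_zeros']
      · constructor
        · rw [ShortComplex.moduleCat_exact_iff_range_eq_ker]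
          dsimp
          change LinearMap.range (dF 0).hom = LinearMap.ker p0.hom
          exact h0
        · rw [ModuleCat.epi_iff_surjective]
          dsimp
          change Function.Surjective p0.hom
          exact hsurj
      all_goals rfl
    | succ n =>
      rw [quasiIsoAt_iff_exactAt']
      · rw [HomologicalComplex.exactAt_iff' _ (n + 2) (n + 1) n (by simp) (by simp)]
        rw [ShortComplex.moduleCat_exact_iff_range_eq_ker]
        change LinearMap.range (ModuleCat.Hom.hom
            (HomologicalComplex.d (mkCplx F dF fun n => (hd n).le) (n + 2) (n + 1))) =
          LinearMap.ker (ModuleCat.Hom.hom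
            (HomologicalComplex.d (mkCplx F dF fun n => (hd n).le) (n + 1) n))
        rw [mkCplx_d21, mkCplx_d]
        exact hd n
      · apply ChainComplex.exactAt_succ_single_obj⟩

/-- The chosen projective resolution of a finite module. -/
noncomputable def resPR (A : ModuleCat R) (hA : Module.Finite R A) : ProjectiveResolution A :=
  mkRes A (resF A hA) (resF_projective A hA) (resD A hA)
    (ModuleCat.ofHom (auxSteps A hA 0).p) (res_p0_surj A hA) (res_p0_ker A hA) (resD_ker A hA)

/-- The `d`-th cosyzygy-style quotient `Ω^d A`. -/
noncomputable def auxSyz (A : ModuleCat R) (hA : Module.Finite R A) (d : ℕ) : ModuleCat R :=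
  ModuleCat.of R (resF A hA d ⧸ LinearMap.range (resD A hA d).hom)

instance auxSyz_finite (A : ModuleCat R) (hA : Module.Finite R A) (d : ℕ) :
    Module.Finite R (auxSyz A hA d) :=
  Module.Finite.of_surjective (LinearMap.range (resD A hA d).hom).mkQ
    (Submodule.mkQ_surjective _)

/-- The shifted resolution resolves `Ω^d A`. -/
noncomputable def resQR (A : ModuleCat R) (hA : Module.Finite R A) (d : ℕ) :
    ProjectiveResolution (auxSyz A hA d) :=
  mkRes _ (fun j => resF A hA (d + j)) (fun j => resF_projective A hA (d + j))
    (fun j => resD A hA (d + j))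
    (ModuleCat.ofHom (LinearMap.range (resD A hA d).hom).mkQ)
    (Submodule.mkQ_surjective _)
    (by
      show LinearMap.range (resD A hA (d + 0)).hom =
        LinearMap.ker ((LinearMap.range (resD A hA d).hom).mkQ)
      rw [Submodule.ker_mkQ]
      rfl)
    (fun j => resD_ker A hA (d + j))

lemma resPR_complex_d (A : ModuleCat R) (hA : Module.Finite R A) (n : ℕ) :
    (resPR A hA).complex.d (n + 1) n = resD A hA n :=
  mkCplx_d (hn := fun m => (resD_ker A hA m).le) n

lemma resQR_complex_d (A : ModuleCat R) (hA : Module.Finite R A) (d j : ℕ) :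
    (resQR A hA d).complex.d (j + 1) j = resD A hA (d + j) :=
  mkCplx_d (hn := fun m => (resD_ker A hA (d + m)).le) j

/-- `Ext^{m+1}` computed concretely with the chosen resolution. -/
noncomputable def extConcIso {Z : ModuleCat R} (PR : ProjectiveResolution Z) (m : ℕ)
    (Y : ModuleCat R) :
    extMod R (m + 1) Z Y ≅
      ((PR.complex.linearYonedaObj R Y).sc' m (m + 1) (m + 1 + 1)).moduleCatLeftHomologyData.H :=
  PR.isoExt (m + 1) Y ≪≫
    HomologicalComplex.homologyIsoSc' _ m (m + 1) (m + 1 + 1) (by simp) (by simp) ≪≫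
    ShortComplex.moduleCatHomologyIso _

/-- Comparison of the shifted complexes. -/
noncomputable def auxBridge (A : ModuleCat R) (hA : Module.Finite R A) (d j : ℕ)
    (Y : ModuleCat R) :
    ((resQR A hA d).complex.linearYonedaObj R Y).sc' j (j + 1) (j + 1 + 1) ≅
      ((resPR A hA).complex.linearYonedaObj R Y).sc' (d + j) (d + j + 1) (d + j + 1 + 1) :=
  ShortComplex.isoMk (Iso.refl _) (Iso.refl _) (Iso.refl _)
    (by
      apply (Category.id_comp _).trans ((Category.comp_id _).symm.trans ?_).symm
      apply ModuleCat.hom_ext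
      apply LinearMap.ext
      intro f
      show (resQR A hA d).complex.d (j + 1) j ≫ f =
        (resPR A hA).complex.d (d + j + 1) (d + j) ≫ f
      rw [resQR_complex_d, resPR_complex_d]
      rfl)
    (by
      apply (Category.id_comp _).trans ((Category.comp_id _).symm.trans ?_).symm
      apply ModuleCat.hom_ext
      apply LinearMap.ext
      intro f
      show (resQR A hA d).complex.d (j + 1 + 1) (j + 1) ≫ f =
        (resPR A hA).complex.d (d + j + 1 + 1) (d + j + 1) ≫ f
      rw [resQR_complex_d, resPR_complex_d]
      rfl)

/-- Dimension shifting: `Ext^{j+1}(Ω^d A, Y) ≅ Ext^{d+j+1}(A, Y)`. -/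
noncomputable def extShiftIso (A : ModuleCat R) (hA : Module.Finite R A) (d j : ℕ)
    (Y : ModuleCat R) :
    extMod R (j + 1) (auxSyz A hA d) Y ≅ extMod R (d + j + 1) A Y :=
  extConcIso (resQR A hA d) j Y ≪≫
    (ShortComplex.moduleCatHomologyIso _).symm ≪≫
    ShortComplex.homologyMapIso (auxBridge A hA d j Y) ≪≫
    ShortComplex.moduleCatHomologyIso _ ≪≫
    (extConcIso (resPR A hA) (d + j) Y).symm

end StableHomAux

/-- Over a Gorenstein local ring of dimension `d`, if `m^t` annihilates all stable Hom
groups between maximal Cohen–Macaulay modules, then `m^t ⊆ ca^{d+1}(R)`. -/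
theorem gorenstein_stableHom_ann (R : Type) [CommRing R] [IsNoetherianRing R] [IsLocalRing R]
    (d : ℕ) (hd : ringKrullDim R = d)
    (hGor : ∀ M : ModuleCat R, Module.Finite R M →
      ∀ i : ℕ, d < i → Subsingleton (extMod R i M (ModuleCat.of R R)))
    (t : ℕ) (ht : 1 ≤ t)
    (hann : ∀ s ∈ maximalIdeal R ^ t, ∀ M N : ModuleCat R,
      Module.Finite R M → Module.Finite R N →
      (∀ i : ℕ, 0 < i → Subsingleton (extMod R i M (ModuleCat.of R R))) →
      (∀ i : ℕ, 0 < i → Subsingleton (extMod R i N (ModuleCat.of R R))) →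
      ∀ f : M →ₗ[R] N, ∃ (P : Type) (_ : AddCommGroup P) (_ : Module R P),
        Module.Projective R P ∧
        ∃ (g : M →ₗ[R] P) (h : P →ₗ[R] N), s • f = h.comp g) :
    ∀ s ∈ maximalIdeal R ^ t, ∀ A B : ModuleCat R,
      Module.Finite R A → Module.Finite R B →
      ∀ x : extMod R (d + 1) A B, s • x = 0 := by
  intro s hs A B hA hB x
  classical
  -- `X = Ω^d A` is maximal Cohen-Macaulay by `hGor` and dimension shifting
  have hMCM : ∀ i : ℕ, 0 < i → Subsingleton (extMod R i (auxSyz A hA d) (ModuleCat.of R R)) := by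
    intro i hi
    obtain ⟨j, rfl⟩ : ∃ j, i = j + 1 := ⟨i - 1, by omega⟩
    exact auxSubsingletonOfIso (extShiftIso A hA d j _) (hGor A hA (d + j + 1) (by omega))
  obtain ⟨P', iP1, iP2, hP'proj, g₀, h, hfac⟩ :=
    hann s hs (auxSyz A hA d) (auxSyz A hA d) (auxSyz_finite A hA d) (auxSyz_finite A hA d)
      hMCM hMCM LinearMap.id
  letI := iP1; letI := iP2; haveI := hP'proj
  -- transfer to the concrete description of `Ext^{d+1}(A,B)`
  refine auxSmulZeroOfIso (extConcIso (resPR A hA) d B) s ?_ x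
  intro z
  obtain ⟨⟨f, hf⟩, rfl⟩ := Submodule.Quotient.mk_surjective _ z
  have hmk : (s • Submodule.Quotient.mk ⟨f, hf⟩ :
      (((resPR A hA).complex.linearYonedaObj R B).sc' d (d + 1) (d + 1 + 1)).moduleCatLeftHomologyData.H) =
      Submodule.Quotient.mk (s • ⟨f, hf⟩) := (Submodule.Quotient.mk_smul _ _ _).symm
  refine hmk.trans ((Submodule.Quotient.mk_eq_zero _).mpr ?_)
  -- view the cocycle as a linear map
  let ff : resF A hA (d + 1) ⟶ B := f
  have hf0 : (resPR A hA).complex.d (d + 1 + 1) (d + 1) ≫ ff = 0 := LinearMap.mem_ker.mp hf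
  rw [resPR_complex_d] at hf0
  have hker : LinearMap.ker (resD A hA d).hom ≤ LinearMap.ker ff.hom := by
    rw [← resD_ker]
    rintro y ⟨v, rfl⟩
    have h2 := ConcreteCategory.congr_hom hf0 v
    exact h2
  set Dd := (resD A hA d).hom with hDd
  set Om := LinearMap.range Dd with hOm
  set fbar : (resF A hA (d + 1) ⧸ LinearMap.ker Dd) →ₗ[R] B :=
    (LinearMap.ker Dd).liftQ ff.hom hker with hfbar
  set q := Dd.quotKerEquivRange with hq
  set ftil : Om →ₗ[R] B := fbar.comp (q.symm : Om →ₗ[R] _) with hftil_def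
  have hftil : ∀ v : resF A hA (d + 1),
      ftil ⟨Dd v, LinearMap.mem_range_self _ v⟩ = ff v := by
    intro v
    have h1 : q (Submodule.Quotient.mk v) = ⟨Dd v, LinearMap.mem_range_self _ v⟩ :=
      Subtype.ext (Dd.quotKerEquivRange_apply_mk v)
    have h2 : q.symm ⟨Dd v, LinearMap.mem_range_self _ v⟩ = Submodule.Quotient.mk v := by
      rw [← h1, LinearEquiv.symm_apply_apply]
    show fbar (q.symm _) = ff v
    rw [h2, hfbar]
    exact Submodule.liftQ_apply _ ff.hom v
  obtain ⟨hhat, hhat_spec⟩ :=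
    Module.projective_lifting_property Om.mkQ h (Submodule.mkQ_surjective Om)
  set w : resF A hA d →ₗ[R] resF A hA d :=
    s • LinearMap.id - hhat ∘ₗ (g₀ ∘ₗ Om.mkQ) with hwdef
  have hw : ∀ u, w u ∈ Om := by
    intro u
    have h2 : Om.mkQ (hhat (g₀ (Om.mkQ u))) = h (g₀ (Om.mkQ u)) :=
      LinearMap.congr_fun hhat_spec (g₀ (Om.mkQ u))
    have h3 : h (g₀ (Om.mkQ u)) = s • (Om.mkQ u) := by
      have h4 := LinearMap.congr_fun hfac.symm (Om.mkQ u)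
      exact h4
    have h1 : Om.mkQ (w u) = 0 := by
      have h5 : w u = s • u - hhat (g₀ (Om.mkQ u)) := by (simp [hwdef]; rfl)
      rw [h5, map_sub, map_smul, h2, h3, sub_self]
    rwa [Submodule.mkQ_apply, Submodule.Quotient.mk_eq_zero] at h1
  set e : resF A hA d →ₗ[R] Om := w.codRestrict Om hw with hedef
  refine ⟨ModuleCat.ofHom (ftil ∘ₗ e : resF A hA d →ₗ[R] B), ?_⟩
  apply Subtype.ext
  show (resPR A hA).complex.d (d + 1) d ≫ ModuleCat.ofHom (ftil ∘ₗ e : resF A hA d →ₗ[R] B) = s • ff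
  rw [resPR_complex_d]
  apply ModuleCat.hom_ext
  apply LinearMap.ext
  intro (v : resF A hA (d + 1))
  show ftil (e (Dd v)) = s • (ff v)
  have h0 : Om.mkQ (Dd v) = 0 := by
    rw [Submodule.mkQ_apply, Submodule.Quotient.mk_eq_zero]
    exact LinearMap.mem_range_self _ v
  have he : e (Dd v) = (⟨s • Dd v, Om.smul_mem s (LinearMap.mem_range_self _ v)⟩ : Om) := by
    apply Subtype.ext
    show w (Dd v) = s • Dd v
    have h5 : w (Dd v) = s • Dd v - hhat (g₀ (Om.mkQ (Dd v))) := by (simp [hwdef]; rfl)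
    erw [h5, h0, map_zero, map_zero, sub_zero]
  rw [he]
  have hsm : (⟨s • Dd v, Om.smul_mem s (LinearMap.mem_range_self _ v)⟩ : Om) =
      s • ⟨Dd v, LinearMap.mem_range_self _ v⟩ := Subtype.ext rfl
  rw [hsm, map_smul, hftil]

end
end
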